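/- Privacy amplification by Poisson sampling: let Z be a type, let M assign to every finite set S of elements of Z a probability measure M(S) on a measurable output space Ω, and let γ ∈ [0,1]. Define the Poisson-subsampled mechanism by (M∘S_γ)(D) = Σ_{T ⊆ D} γ^{|T|} (1−γ)^{|D|−|T|} · M(T), the mixture over all subsets T of the finite set D with each element of D included independently with probability γ. Suppose (P,Q) dominates M for add neighbors, i.e. for all α ≥ 0, every finite set S and every x ∉ S, H_α(M(S) ‖ M(S ∪ {x})) ≤ H_α(P‖Q). Then (P, (1−γ)P + γQ) dominates M∘S_γ for add neighbors: for all α ≥ 0, every finite set S and every x ∉ S, H_α((M∘S_γ)(S) ‖ (M∘S_γ)(S ∪ {x})) ≤ H_α(P ‖ (1−γ)P + γQ). -/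

import Mathlib

open MeasureTheory

/-- The hockey-stick divergence `H_α(P‖Q) = ∫ (p − α·q)₊ dμ` with `μ = P + Q`. -/
noncomputable def hockeyStick {Ω : Type*} [MeasurableSpace Ω] (α : ℝ) (P Q : Measure Ω) : ℝ :=
  ∫ ω, max ((P.rnDeriv (P + Q) ω).toReal - α * (Q.rnDeriv (P + Q) ω).toReal) 0 ∂(P + Q)

/-- The Poisson-subsampled mechanism: each element of the finite dataset `D` is kept
independently with probability `γ`, so the output distribution is
`Σ_{T ⊆ D} γ^{|T|} (1−γ)^{|D|−|T|} · M(T)`. -/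
noncomputable def poissonSubsample {Z Ω : Type*} [MeasurableSpace Ω] [DecidableEq Z]
    (M : Finset Z → Measure Ω) (γ : ℝ) (D : Finset Z) : Measure Ω :=
  ∑ T ∈ D.powerset, ENNReal.ofReal (γ ^ T.card * (1 - γ) ^ (D.card - T.card)) • M T

section HS

variable {Ω : Type*} [MeasurableSpace Ω] (α : ℝ) (P Q : Measure Ω)
  [IsFiniteMeasure P] [IsFiniteMeasure Q]

/-- Lemma A: the hockey-stick divergence dominates `P(E) − α·Q(E)` for every measurable `E`. -/
lemma hs_ge {E : Set Ω} (hE : MeasurableSet E) :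
    (P E).toReal - α * (Q E).toReal ≤ hockeyStick α P Q := by
  set μ := P + Q with hμ
  have hP : P ≪ μ := Measure.absolutelyContinuous_of_le (Measure.le_add_right le_rfl)
  have hQ : Q ≪ μ := Measure.absolutelyContinuous_of_le (Measure.le_add_left le_rfl)
  have hip : Integrable (fun ω => (P.rnDeriv μ ω).toReal) μ :=
    Measure.integrable_toReal_rnDeriv
  have hiq : Integrable (fun ω => (Q.rnDeriv μ ω).toReal) μ :=
    Measure.integrable_toReal_rnDeriv
  have h1 : (P E).toReal - α * (Q E).toReal
      = ∫ ω in E, ((P.rnDeriv μ ω).toReal - α * (Q.rnDeriv μ ω).toReal) ∂μ := by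
    rw [integral_sub (hip.restrict) ((hiq.restrict).const_mul α), integral_const_mul,
      Measure.setIntegral_toReal_rnDeriv hP, Measure.setIntegral_toReal_rnDeriv hQ]; rfl
  have h2 : ∫ ω in E, ((P.rnDeriv μ ω).toReal - α * (Q.rnDeriv μ ω).toReal) ∂μ
      ≤ ∫ ω in E, max ((P.rnDeriv μ ω).toReal - α * (Q.rnDeriv μ ω).toReal) 0 ∂μ := by
    refine setIntegral_mono (hip.restrict.sub ((hiq.restrict).const_mul α)) ?_
      (fun ω => le_max_left _ _)
    exact (hip.restrict.sub ((hiq.restrict).const_mul α)).pos_part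
  have h3 : ∫ ω in E, max ((P.rnDeriv μ ω).toReal - α * (Q.rnDeriv μ ω).toReal) 0 ∂μ
      ≤ ∫ ω, max ((P.rnDeriv μ ω).toReal - α * (Q.rnDeriv μ ω).toReal) 0 ∂μ := by
    refine setIntegral_le_integral ((hip.sub (hiq.const_mul α)).pos_part) ?_
    exact Filter.Eventually.of_forall (fun ω => le_max_right _ _)
  calc (P E).toReal - α * (Q E).toReal
      ≤ ∫ ω in E, max ((P.rnDeriv μ ω).toReal - α * (Q.rnDeriv μ ω).toReal) 0 ∂μ := by
        rw [h1]; exact h2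
    _ ≤ hockeyStick α P Q := h3

lemma hs_nonneg : 0 ≤ hockeyStick α P Q := by
  have := hs_ge α P Q MeasurableSet.empty
  simpa using this

/-- Lemma B: the hockey-stick divergence is attained at a measurable set. -/
lemma hs_eq_set : ∃ E : Set Ω, MeasurableSet E ∧
    hockeyStick α P Q = (P E).toReal - α * (Q E).toReal := by
  set μ := P + Q with hμ
  have hP : P ≪ μ := Measure.absolutelyContinuous_of_le (Measure.le_add_right le_rfl)
  have hQ : Q ≪ μ := Measure.absolutelyContinuous_of_le (Measure.le_add_left le_rfl)
  have hip : Integrable (fun ω => (P.rnDeriv μ ω).toReal) μ :=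
    Measure.integrable_toReal_rnDeriv
  have hiq : Integrable (fun ω => (Q.rnDeriv μ ω).toReal) μ :=
    Measure.integrable_toReal_rnDeriv
  set f : Ω → ℝ := fun ω => (P.rnDeriv μ ω).toReal - α * (Q.rnDeriv μ ω).toReal with hf
  have hfm : Measurable f :=
    ((P.measurable_rnDeriv μ).ennreal_toReal).sub
      (((Q.measurable_rnDeriv μ).ennreal_toReal).const_mul α)
  set E : Set Ω := {ω | 0 < f ω} with hEdef
  have hE : MeasurableSet E := measurableSet_lt measurable_const hfm
  refine ⟨E, hE, ?_⟩
  have hind : ∀ ω, max (f ω) 0 = E.indicator f ω := by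
    intro ω
    by_cases h : 0 < f ω
    · rw [Set.indicator_of_mem (show ω ∈ E from h) f, max_eq_left h.le]
    · rw [Set.indicator_of_notMem (show ω ∉ E from h) f, max_eq_right (not_lt.mp h)]
  have : hockeyStick α P Q = ∫ ω, E.indicator f ω ∂μ := by
    unfold hockeyStick
    exact integral_congr_ae (Filter.Eventually.of_forall hind)
  rw [this, integral_indicator hE]
  rw [integral_sub (hip.restrict) ((hiq.restrict).const_mul α), integral_const_mul,
    Measure.setIntegral_toReal_rnDeriv hP, Measure.setIntegral_toReal_rnDeriv hQ]; rfl

end HS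

section Poisson

variable {Z Ω : Type*} [MeasurableSpace Ω] [DecidableEq Z]

lemma poisson_insert (M : Finset Z → Measure Ω) {γ : ℝ} (h0 : 0 ≤ γ) (h1 : γ ≤ 1)
    {S : Finset Z} {x : Z} (hx : x ∉ S) :
    poissonSubsample M γ (insert x S) =
      ENNReal.ofReal (1 - γ) • poissonSubsample M γ S
        + ENNReal.ofReal γ • poissonSubsample (fun T => M (insert x T)) γ S := by
  unfold poissonSubsample
  have hdisj : Disjoint S.powerset (S.powerset.image (insert x)) := by
    rw [Finset.disjoint_left]
    intro T hT hT'
    obtain ⟨U, hU, hUx⟩ := Finset.mem_image.mp hT'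
    have hxT : x ∈ T := hUx ▸ Finset.mem_insert_self x U
    exact hx (Finset.mem_powerset.mp hT hxT)
  rw [Finset.powerset_insert, Finset.sum_union hdisj, Finset.smul_sum, Finset.smul_sum]
  congr 1
  · refine Finset.sum_congr rfl (fun T hT => ?_)
    have hTS : T ⊆ S := Finset.mem_powerset.mp hT
    have hcard : T.card ≤ S.card := Finset.card_le_card hTS
    rw [Finset.card_insert_of_notMem hx, Nat.succ_sub hcard, smul_smul,
      ← ENNReal.ofReal_mul (by linarith : (0:ℝ) ≤ 1 - γ)]
    congr 2
    rw [pow_succ]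
    ring
  · rw [Finset.sum_image (fun a ha b hb hab => by
      have hxa : x ∉ a := fun h => hx (Finset.mem_powerset.mp ha h)
      have hxb : x ∉ b := fun h => hx (Finset.mem_powerset.mp hb h)
      rw [← Finset.erase_insert hxa, ← Finset.erase_insert hxb, hab])]
    refine Finset.sum_congr rfl (fun T hT => ?_)
    have hTS : T ⊆ S := Finset.mem_powerset.mp hT
    have hxT : x ∉ T := fun h => hx (hTS h)
    rw [Finset.card_insert_of_notMem hx, Finset.card_insert_of_notMem hxT,
      Nat.succ_sub_succ, smul_smul, ← ENNReal.ofReal_mul h0]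
    congr 2
    ring

lemma poisson_univ (M : Finset Z → Measure Ω) (hM : ∀ T, M T Set.univ = 1)
    {γ : ℝ} (h0 : 0 ≤ γ) (h1 : γ ≤ 1) (S : Finset Z) :
    poissonSubsample M γ S Set.univ = 1 := by
  induction S using Finset.induction_on generalizing M with
  | empty => simp [poissonSubsample, hM]
  | insert _ _ hx ih =>
    rw [poisson_insert M h0 h1 hx, Measure.add_apply, Measure.smul_apply, Measure.smul_apply,
      ih M hM, ih _ (fun T => hM _), smul_eq_mul, smul_eq_mul, mul_one, mul_one,
      ← ENNReal.ofReal_add (by linarith) h0]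
    norm_num

lemma poisson_apply (M : Finset Z → Measure Ω) (γ : ℝ) (S : Finset Z) (E : Set Ω) :
    poissonSubsample M γ S E =
      ∑ T ∈ S.powerset, ENNReal.ofReal (γ ^ T.card * (1 - γ) ^ (S.card - T.card)) * M T E := by
  unfold poissonSubsample
  rw [Measure.finset_sum_apply]
  rfl

end Poisson

/-- Privacy amplification by Poisson sampling: if `(P,Q)` dominates `M` for add neighbors,
then `(P, (1−γ)P + γQ)` dominates the Poisson-subsampled mechanism for add neighbors. -/
theorem poisson_subsampling_amplification
    {Z Ω Ω' : Type*} [MeasurableSpace Ω] [MeasurableSpace Ω'] [DecidableEq Z]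
    (M : Finset Z → Measure Ω) (hM : ∀ S, IsProbabilityMeasure (M S))
    (γ : ℝ) (hγ : γ ∈ Set.Icc (0:ℝ) 1)
    (P Q : Measure Ω') [IsProbabilityMeasure P] [IsProbabilityMeasure Q]
    (hdom : ∀ α : ℝ, 0 ≤ α → ∀ (S : Finset Z) (x : Z), x ∉ S →
      hockeyStick α (M S) (M (insert x S)) ≤ hockeyStick α P Q) :
    ∀ α : ℝ, 0 ≤ α → ∀ (S : Finset Z) (x : Z), x ∉ S →
      hockeyStick α (poissonSubsample M γ S) (poissonSubsample M γ (insert x S))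
        ≤ hockeyStick α P (ENNReal.ofReal (1 - γ) • P + ENNReal.ofReal γ • Q) := by
  obtain ⟨h0, h1⟩ := hγ
  intro α hα S x hx
  set A := poissonSubsample M γ S with hA
  set B := poissonSubsample (fun T => M (insert x T)) γ S with hB
  set mix : Measure Ω' := ENNReal.ofReal (1 - γ) • P + ENNReal.ofReal γ • Q with hmix
  have hAuniv : A Set.univ = 1 :=
    poisson_univ M (fun T => (hM T).measure_univ) h0 h1 S
  have hBuniv : B Set.univ = 1 :=
    poisson_univ _ (fun T => (hM _).measure_univ) h0 h1 S
  haveI hAprob : IsProbabilityMeasure A := ⟨hAuniv⟩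
  haveI hBprob : IsProbabilityMeasure B := ⟨hBuniv⟩
  haveI hmixprob : IsProbabilityMeasure mix := by
    constructor
    rw [hmix, Measure.add_apply, Measure.smul_apply, Measure.smul_apply,
      measure_univ, measure_univ, smul_eq_mul, smul_eq_mul, mul_one, mul_one,
      ← ENNReal.ofReal_add (by linarith) h0]
    norm_num
  have hdecomp : poissonSubsample M γ (insert x S)
      = ENNReal.ofReal (1 - γ) • A + ENNReal.ofReal γ • B := poisson_insert M h0 h1 hx
  rw [hdecomp]
  set ν : Measure Ω := ENNReal.ofReal (1 - γ) • A + ENNReal.ofReal γ • B with hν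
  haveI hνprob : IsProbabilityMeasure ν := by
    constructor
    rw [hν, Measure.add_apply, Measure.smul_apply, Measure.smul_apply,
      hAuniv, hBuniv, smul_eq_mul, smul_eq_mul, mul_one, mul_one,
      ← ENNReal.ofReal_add (by linarith) h0]
    norm_num
  -- evaluate ν on sets
  have hν_apply : ∀ E : Set Ω, (ν E).toReal = (1 - γ) * (A E).toReal + γ * (B E).toReal := by
    intro E
    rw [hν, Measure.add_apply, Measure.smul_apply, Measure.smul_apply, smul_eq_mul, smul_eq_mul,
      ENNReal.toReal_add (by finiteness) (by finiteness), ENNReal.toReal_mul, ENNReal.toReal_mul,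
      ENNReal.toReal_ofReal (by linarith), ENNReal.toReal_ofReal h0]
  have hmix_apply : ∀ E : Set Ω',
      (mix E).toReal = (1 - γ) * (P E).toReal + γ * (Q E).toReal := by
    intro E
    rw [hmix, Measure.add_apply, Measure.smul_apply, Measure.smul_apply, smul_eq_mul, smul_eq_mul,
      ENNReal.toReal_add (by finiteness) (by finiteness), ENNReal.toReal_mul, ENNReal.toReal_mul,
      ENNReal.toReal_ofReal (by linarith), ENNReal.toReal_ofReal h0]
  have hRHS0 : 0 ≤ hockeyStick α P mix := hs_nonneg α P mix
  set c : ℝ := 1 - α * (1 - γ) with hc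
  by_cases hcpos : 0 < c
  · -- main case
    set α' : ℝ := α * γ / c with hα'def
    have hα' : 0 ≤ α' := div_nonneg (mul_nonneg hα h0) hcpos.le
    have hcα' : c * α' = α * γ := by
      rw [hα'def, mul_div_assoc']
      exact mul_div_cancel_left₀ _ hcpos.ne'
    -- step 1: H_α(A‖ν) = c * (A E − α' B E) for the optimal E
    obtain ⟨E, hEm, hEeq⟩ := hs_eq_set α A ν
    have hstep1 : hockeyStick α A ν = c * ((A E).toReal - α' * (B E).toReal) := by
      rw [hEeq, hν_apply E, hα'def, hc]
      have hcne : (1 - α * (1 - γ)) ≠ 0 := by rw [← hc]; exact ne_of_gt hcpos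
      field_simp
      ring
    -- step 2: A E − α' B E ≤ Σ_T w_T (M T E − α' M(insert x T) E) ≤ H_{α'}(P‖Q)
    have hsum : (A E).toReal - α' * (B E).toReal ≤ hockeyStick α' P Q := by
      have hAE : (A E).toReal = ∑ T ∈ S.powerset,
          (γ ^ T.card * (1 - γ) ^ (S.card - T.card)) * (M T E).toReal := by
        rw [hA, poisson_apply, ENNReal.toReal_sum (fun T hT => by finiteness)]
        refine Finset.sum_congr rfl (fun T hT => ?_)
        rw [ENNReal.toReal_mul, ENNReal.toReal_ofReal
          (mul_nonneg (pow_nonneg h0 _) (pow_nonneg (by linarith) _))]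
      have hBE : (B E).toReal = ∑ T ∈ S.powerset,
          (γ ^ T.card * (1 - γ) ^ (S.card - T.card)) * (M (insert x T) E).toReal := by
        rw [hB, poisson_apply, ENNReal.toReal_sum (fun T hT => by finiteness)]
        refine Finset.sum_congr rfl (fun T hT => ?_)
        rw [ENNReal.toReal_mul, ENNReal.toReal_ofReal
          (mul_nonneg (pow_nonneg h0 _) (pow_nonneg (by linarith) _))]
      have hwsum : ∑ T ∈ S.powerset,
          (γ ^ T.card * (1 - γ) ^ (S.card - T.card)) = 1 := by
        have := poisson_univ M (fun T => (hM T).measure_univ) h0 h1 S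
        rw [poisson_apply] at this
        have h2 : ∑ T ∈ S.powerset,
            ENNReal.ofReal (γ ^ T.card * (1 - γ) ^ (S.card - T.card)) = 1 := by
          simpa [(hM _).measure_univ] using this
        have h3 := congrArg ENNReal.toReal h2
        rw [ENNReal.toReal_sum (fun T hT => by finiteness)] at h3
        simpa [ENNReal.toReal_ofReal
          (mul_nonneg (pow_nonneg h0 _) (pow_nonneg (by linarith : (0:ℝ) ≤ 1 - γ) _))] using h3
      rw [hAE, hBE, Finset.mul_sum, ← Finset.sum_sub_distrib]
      calc ∑ T ∈ S.powerset, ((γ ^ T.card * (1 - γ) ^ (S.card - T.card)) * (M T E).toReal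
              - α' * ((γ ^ T.card * (1 - γ) ^ (S.card - T.card)) * (M (insert x T) E).toReal))
          ≤ ∑ T ∈ S.powerset,
              (γ ^ T.card * (1 - γ) ^ (S.card - T.card)) * hockeyStick α' P Q := by
            refine Finset.sum_le_sum (fun T hT => ?_)
            have hw : (0:ℝ) ≤ γ ^ T.card * (1 - γ) ^ (S.card - T.card) :=
              mul_nonneg (pow_nonneg h0 _) (pow_nonneg (by linarith) _)
            have hxT : x ∉ T := fun h => hx (Finset.mem_powerset.mp hT h)
            haveI := hM T; haveI := hM (insert x T)
            have hAle : (M T E).toReal - α' * (M (insert x T) E).toReal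
                ≤ hockeyStick α' (M T) (M (insert x T)) := hs_ge α' _ _ hEm
            have hdomT := hdom α' hα' T x hxT
            nlinarith [hAle, hdomT]
        _ = hockeyStick α' P Q := by rw [← Finset.sum_mul, hwsum, one_mul]
    -- step 3: c * H_{α'}(P‖Q) ≤ H_α(P‖mix)
    obtain ⟨F, hFm, hFeq⟩ := hs_eq_set α' P Q
    have hstep3 : c * hockeyStick α' P Q ≤ hockeyStick α P mix := by
      have hge := hs_ge α P mix hFm
      rw [hmix_apply F] at hge
      rw [hFeq]
      refine le_trans (le_of_eq ?_) hge
      have hcne : (1 - α * (1 - γ)) ≠ 0 := by rw [← hc]; exact ne_of_gt hcpos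
      rw [hα'def, hc]
      field_simp
      ring
    calc hockeyStick α A ν = c * ((A E).toReal - α' * (B E).toReal) := hstep1
      _ ≤ c * hockeyStick α' P Q := mul_le_mul_of_nonneg_left hsum hcpos.le
      _ ≤ hockeyStick α P mix := hstep3
  · -- c ≤ 0: LHS ≤ 0 ≤ RHS
    push_neg at hcpos
    obtain ⟨E, hEm, hEeq⟩ := hs_eq_set α A ν
    have hLHS : hockeyStick α A ν ≤ 0 := by
      rw [hEeq, hν_apply E]
      have hA1 : (A E).toReal ≤ 1 := by
        have := measure_mono (Set.subset_univ E) (μ := A)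
        rw [hAuniv] at this
        exact (ENNReal.toReal_le_toReal (by finiteness) (by norm_num)).mpr this |>.trans (by norm_num)
      have hA0 : 0 ≤ (A E).toReal := ENNReal.toReal_nonneg
      have hB0 : 0 ≤ (B E).toReal := ENNReal.toReal_nonneg
      have h1' : (1 - α * (1 - γ)) * (A E).toReal ≤ 0 :=
        mul_nonpos_of_nonpos_of_nonneg (by linarith [hc ▸ hcpos]) hA0
      nlinarith [mul_nonneg (mul_nonneg hα h0) hB0]
    linarith
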